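/- Let (T, F) be a torsion pair in the category of finite-dimensional representations of a quiver Q over a finite field. Then in the completed Hall algebra H(Q), the identity χ = χ(F)·χ(T) holds, where χ(C) denotes the formal sum of all isomorphism classes of objects in a subcategory C, and χ = χ(mod kQ). -/

import Mathlib

namespace QP

structure FQuiver where
  V : Type
  E : Type
  [fV : Fintype V]
  [fE : Fintype E]
  [dV : DecidableEq V]
  [dE : DecidableEq E]
  src : E → V
  tgt : E → V

attribute [instance] FQuiver.fV FQuiver.fE FQuiver.dV FQuiver.dE

variable (Q : FQuiver) (K : Type) [Field K] [Fintype K]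

/-- A finite-dimensional representation of the quiver `Q` over `K`. -/
structure Rep where
  d : Q.V → ℕ
  m : ∀ e : Q.E, (Fin (d (Q.src e)) → K) →ₗ[K] (Fin (d (Q.tgt e)) → K)

variable {Q K}

/-- Morphisms of representations. -/
structure Hom (M N : Rep Q K) where
  f : ∀ v, (Fin (M.d v) → K) →ₗ[K] (Fin (N.d v) → K)
  comm : ∀ e, (f (Q.tgt e)).comp (M.m e) = (N.m e).comp (f (Q.src e))

def Hom.IsIso {M N : Rep Q K} (φ : Hom M N) : Prop := ∀ v, Function.Bijective (φ.f v)

/-- Isomorphism of representations. -/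
def repIso (M N : Rep Q K) : Prop := ∃ φ : Hom M N, φ.IsIso

/-- The number of automorphisms `a_M = |Aut(M)|`. -/
noncomputable def aut (M : Rep Q K) : ℕ := Nat.card {φ : Hom M M // φ.IsIso}

/-- `ι, π` form a short exact sequence `0 → V' → W → U → 0`. -/
def IsExactPair {V' W U : Rep Q K} (ι : Hom V' W) (π : Hom W U) : Prop :=
  ∀ v, Function.Injective (ι.f v) ∧ Function.Surjective (π.f v) ∧
    LinearMap.range (ι.f v) = LinearMap.ker (π.f v)

/-- Number of exact pairs `0 → V' → W → U → 0`; equals `F^W_{U V'} · a_U · a_{V'}`. -/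
noncomputable def epairs (U V' W : Rep Q K) : ℕ :=
  Nat.card {p : Hom V' W × Hom W U // IsExactPair p.1 p.2}

variable (Q K) in
/-- Representations with a fixed dimension vector. -/
def RepOf (d : Q.V → ℕ) := ∀ e : Q.E, (Fin (d (Q.src e)) → K) →ₗ[K] (Fin (d (Q.tgt e)) → K)

def RepOf.toRep {d : Q.V → ℕ} (m : RepOf Q K d) : Rep Q K := ⟨d, m⟩

variable (Q K) in
/-- `|GL_d| = ∏_v |GL_{d v}(K)|`. -/
noncomputable def glcard (d : Q.V → ℕ) : ℕ :=
  ∏ v : Q.V, Nat.card ((Fin (d v) → K) ≃ₗ[K] (Fin (d v) → K))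

/-- A Hall-algebra element constant on isomorphism classes. -/
def IsoInvariant (h : Rep Q K → ℚ) : Prop := ∀ M N, repIso M N → h M = h N

/-- The Hall product.  For iso-invariant `h₁ h₂` this computes
`([U][V] = ∑_W F^W_{UV}[W])`-multiplication, coefficientwise:
`(h₁ * h₂)(W) = ∑_{[U],[V]} h₁(U) h₂(V) F^W_{UV}`, using that the number of exact
pairs is `F^W_{UV} a_U a_V` and that each iso class of dimension `δ` has
`glcard δ / a` objects. -/
noncomputable def hmul (h₁ h₂ : Rep Q K → ℚ) : Rep Q K → ℚ := fun W =>
  ∑ᶠ (δ : Q.V → ℕ) (_ : ∀ v, δ v ≤ W.d v) (mV : RepOf Q K δ)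
      (mU : RepOf Q K fun v => W.d v - δ v),
    h₁ mU.toRep * h₂ mV.toRep * (epairs mU.toRep mV.toRep W : ℚ) /
      ((glcard Q K δ : ℚ) * (glcard Q K fun v => W.d v - δ v))

/-- The unit `[0]` of the Hall algebra. -/
noncomputable def hone : Rep Q K → ℚ := fun W => if W.d = fun _ => 0 then 1 else 0

open Classical in
/-- `χ(𝒞) = ∑_{M ∈ 𝒞} [M]` for a (iso-closed) subcategory cut out by `P`. -/
noncomputable def chi (P : Rep Q K → Prop) : Rep Q K → ℚ := fun M => if P M then 1 else 0

end QP

namespace QP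


section Helpers
open LinearMap
variable {Q : FQuiver} {K : Type} [Field K] [Fintype K]

instance {a b : ℕ} : Finite ((Fin a → K) →ₗ[K] (Fin b → K)) :=
  Finite.of_injective (fun f => (f : (Fin a → K) → (Fin b → K))) DFunLike.coe_injective

instance {a b : ℕ} : Finite ((Fin a → K) ≃ₗ[K] (Fin b → K)) :=
  Finite.of_injective (fun f => (f : (Fin a → K) → (Fin b → K))) DFunLike.coe_injective

theorem Hom.f_inj {M N : Rep Q K} : Function.Injective (fun φ : Hom M N => φ.f) := by
  rintro ⟨f, _⟩ ⟨g, _⟩ h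
  simpa using h

instance {M N : Rep Q K} : Finite (Hom M N) := Finite.of_injective _ Hom.f_inj

instance {d : Q.V → ℕ} : Finite (RepOf Q K d) :=
  inferInstanceAs (Finite (∀ e : Q.E, (Fin (d (Q.src e)) → K) →ₗ[K] (Fin (d (Q.tgt e)) → K)))

theorem Hom.comm_apply {M N : Rep Q K} (φ : Hom M N) (e : Q.E) (x) :
    φ.f (Q.tgt e) (M.m e x) = N.m e (φ.f (Q.src e) x) := by
  have := DFunLike.congr_fun (φ.comm e) x
  simpa using this

def Hom.comp {A B C : Rep Q K} (g : Hom B C) (f : Hom A B) : Hom A C :=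
  ⟨fun v => (g.f v).comp (f.f v), fun e => by
    rw [LinearMap.comp_assoc, f.comm e, ← LinearMap.comp_assoc, g.comm e,
      LinearMap.comp_assoc]⟩

theorem glcard_pos (d : Q.V → ℕ) : 0 < glcard Q K d :=
  Finset.prod_pos fun v _ => @Nat.card_pos _ ⟨LinearEquiv.refl K _⟩ _

/-- Transport of a representation along a family of linear equivalences. -/
def transportRep (L : Rep Q K) (d : Q.V → ℕ)
    (α : ∀ v, (Fin (d v) → K) ≃ₗ[K] (Fin (L.d v) → K)) : RepOf Q K d :=
  fun e => ((α (Q.tgt e)).symm.toLinearMap.comp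
    ((L.m e).comp (α (Q.src e)).toLinearMap))

theorem transportRep_iso (L : Rep Q K) (d : Q.V → ℕ)
    (α : ∀ v, (Fin (d v) → K) ≃ₗ[K] (Fin (L.d v) → K)) :
    repIso (transportRep L d α).toRep L :=
  ⟨⟨fun v => (α v).toLinearMap, fun e => by
      ext x
      simp [transportRep, RepOf.toRep]⟩,
   fun v => (α v).bijective⟩

theorem nat_card_sigma {ι : Type} [Fintype ι] (f : ι → Type) [∀ i, Finite (f i)] :
    Nat.card (Σ i, f i) = ∑ i, Nat.card (f i) := by
  letI : ∀ i, Fintype (f i) := fun i => Fintype.ofFinite _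
  rw [Nat.card_eq_fintype_card, Fintype.card_sigma]
  exact Finset.sum_congr rfl fun i _ => (Nat.card_eq_fintype_card).symm

end Helpers

section Core
open LinearMap

variable {Q : FQuiver} {K : Type} [Field K] [Fintype K]
variable {T F : Rep Q K → Prop}
variable {W L N : Rep Q K} {ι₀ : Hom L W} {π₀ : Hom W N}

theorem range_eq
    (hHom : ∀ (M N : Rep Q K) (φ : Hom M N), T M → F N → ∀ v, φ.f v = 0)
    (hTL : T L) (hFN : F N) (hex : IsExactPair ι₀ π₀)
    {dV dU : Q.V → ℕ} {mV : RepOf Q K dV} {mU : RepOf Q K dU}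
    {ι : Hom mV.toRep W} {π : Hom W mU.toRep} (hexp : IsExactPair ι π)
    (hT : T mV.toRep) (hF : F mU.toRep) (v : Q.V) :
    range (ι.f v) = range (ι₀.f v) ∧ ker (π.f v) = ker (π₀.f v) := by
  have c1 : (π₀.f v).comp (ι.f v) = 0 := hHom _ _ (Hom.comp π₀ ι) hT hFN v
  have c2 : (π.f v).comp (ι₀.f v) = 0 := hHom _ _ (Hom.comp π ι₀) hTL hF v
  have h1 : range (ι.f v) ≤ ker (π₀.f v) := range_le_ker_iff.mpr c1
  have h2 : range (ι₀.f v) ≤ ker (π.f v) := range_le_ker_iff.mpr c2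
  have e1 : range (ι.f v) = ker (π.f v) := (hexp v).2.2
  have e0 : range (ι₀.f v) = ker (π₀.f v) := (hex v).2.2
  have hr : range (ι.f v) = range (ι₀.f v) :=
    le_antisymm (e0 ▸ h1) (e1 ▸ h2)
  exact ⟨hr, by rw [← e1, hr, e0]⟩

/-- dimension of a subrep equals `L.d` whenever an admissible exact pair exists -/
theorem dim_eq
    (hHom : ∀ (M N : Rep Q K) (φ : Hom M N), T M → F N → ∀ v, φ.f v = 0)
    (hTL : T L) (hFN : F N) (hex : IsExactPair ι₀ π₀)
    {dV dU : Q.V → ℕ} {mV : RepOf Q K dV} {mU : RepOf Q K dU}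
    {ι : Hom mV.toRep W} {π : Hom W mU.toRep} (hexp : IsExactPair ι π)
    (hT : T mV.toRep) (hF : F mU.toRep) : dV = L.d := by
  funext v
  have hr := (range_eq hHom hTL hFN hex hexp hT hF v).1
  have a1 : Module.finrank K ↥(range (ι.f v)) = dV v := by
    rw [LinearMap.finrank_range_of_inj (hexp v).1]
    show Module.finrank K (Fin (dV v) → K) = dV v
    simp
  have a2 : Module.finrank K ↥(range (ι₀.f v)) = L.d v := by
    rw [LinearMap.finrank_range_of_inj (hex v).1]; simp
  rw [← a1, hr, a2]

theorem card_eq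
    (hTiso : ∀ M N, repIso M N → (T M ↔ T N))
    (hFiso : ∀ M N, repIso M N → (F M ↔ F N))
    (hHom : ∀ (M N : Rep Q K) (φ : Hom M N), T M → F N → ∀ v, φ.f v = 0)
    (hTL : T L) (hFN : F N) (hex : IsExactPair ι₀ π₀) :
    Nat.card (Σ q : RepOf Q K L.d × RepOf Q K N.d,
      {p : Hom q.1.toRep W × Hom W q.2.toRep //
        IsExactPair p.1 p.2 ∧ T q.1.toRep ∧ F q.2.toRep}) =
    glcard Q K L.d * glcard Q K N.d := by
  classical
  have hι₀inj : ∀ v, Function.Injective (ι₀.f v) := fun v => (hex v).1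
  have hπ₀surj : ∀ v, Function.Surjective (π₀.f v) := fun v => (hex v).2.1
  have hGL : Nat.card ((∀ v, (Fin (L.d v) → K) ≃ₗ[K] (Fin (L.d v) → K)) ×
      (∀ v, (Fin (N.d v) → K) ≃ₗ[K] (Fin (N.d v) → K))) =
      glcard Q K L.d * glcard Q K N.d := by
    rw [Nat.card_prod, Nat.card_pi, Nat.card_pi]; rfl
  rw [← hGL]
  -- choose a linear retraction of ι₀ and a linear section of π₀
  choose g hg using fun v =>
    (ι₀.f v).exists_leftInverse_of_injective (ker_eq_bot.mpr (hι₀inj v))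
  choose sc hsc using fun v =>
    (π₀.f v).exists_rightInverse_of_surjective (range_eq_top.mpr (hπ₀surj v))
  have hg' : ∀ v x, g v (ι₀.f v x) = x := fun v x => by
    have := DFunLike.congr_fun (hg v) x; simpa using this
  have hsc' : ∀ v y, π₀.f v (sc v y) = y := fun v y => by
    have := DFunLike.congr_fun (hsc v) y; simpa using this
  -- key identities for admissible exact pairs
  have hidA : ∀ (mV : RepOf Q K L.d) (mU : RepOf Q K N.d) (ι : Hom mV.toRep W)
      (π : Hom W mU.toRep), IsExactPair ι π → T mV.toRep → F mU.toRep →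
      ∀ v x, ι₀.f v (g v (ι.f v x)) = ι.f v x := by
    intro mV mU ι π hexp hT hF v x
    have hr := (range_eq hHom hTL hFN hex hexp hT hF v).1
    have : ι.f v x ∈ range (ι₀.f v) := hr ▸ LinearMap.mem_range_self _ x
    obtain ⟨y, hy⟩ := this
    rw [← hy, hg']
  have hidB : ∀ (mV : RepOf Q K L.d) (mU : RepOf Q K N.d) (ι : Hom mV.toRep W)
      (π : Hom W mU.toRep), IsExactPair ι π → T mV.toRep → F mU.toRep →
      ∀ v x, π.f v (sc v (π₀.f v x)) = π.f v x := by
    intro mV mU ι π hexp hT hF v x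
    have hk := (range_eq hHom hTL hFN hex hexp hT hF v).2
    have hker : sc v (π₀.f v x) - x ∈ ker (π.f v) := by
      rw [hk, LinearMap.mem_ker, map_sub, hsc', sub_self]
    exact LinearMap.sub_mem_ker_iff.mp hker
  have hbij1 : ∀ (mV : RepOf Q K L.d) (mU : RepOf Q K N.d) (ι : Hom mV.toRep W)
      (π : Hom W mU.toRep), IsExactPair ι π → T mV.toRep → F mU.toRep →
      ∀ v, Function.Bijective ((g v).comp (ι.f v)) := by
    intro mV mU ι π hexp hT hF v
    have hinj : Function.Injective ((g v).comp (ι.f v)) := by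
      intro x y hxy
      simp only [LinearMap.comp_apply] at hxy
      apply (hexp v).1
      rw [← hidA mV mU ι π hexp hT hF v x, ← hidA mV mU ι π hexp hT hF v y, hxy]
    exact ⟨hinj, LinearMap.injective_iff_surjective.mp hinj⟩
  have hbij2 : ∀ (mV : RepOf Q K L.d) (mU : RepOf Q K N.d) (ι : Hom mV.toRep W)
      (π : Hom W mU.toRep), IsExactPair ι π → T mV.toRep → F mU.toRep →
      ∀ v, Function.Bijective ((π.f v).comp (sc v)) := by
    intro mV mU ι π hexp hT hF v
    have hsurj : Function.Surjective ((π.f v).comp (sc v)) := by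
      intro y
      obtain ⟨x, hx⟩ := (hexp v).2.1 y
      refine ⟨π₀.f v x, ?_⟩
      simp only [LinearMap.comp_apply]
      rw [hidB mV mU ι π hexp hT hF v x, hx]
    exact ⟨LinearMap.injective_iff_surjective.mpr hsurj, hsurj⟩
  apply le_antisymm
  · -- inject the big sigma type into GL-pairs
    refine Nat.card_le_card_of_injective
      (fun s => (fun v => LinearEquiv.ofBijective ((g v).comp (s.2.1.1.f v))
          (hbij1 s.1.1 s.1.2 s.2.1.1 s.2.1.2 s.2.2.1 s.2.2.2.1 s.2.2.2.2 v),
        fun v => LinearEquiv.ofBijective ((s.2.1.2.f v).comp (sc v))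
          (hbij2 s.1.1 s.1.2 s.2.1.1 s.2.1.2 s.2.2.1 s.2.2.2.1 s.2.2.2.2 v))) ?_
    rintro ⟨⟨mV, mU⟩, ⟨⟨ι, π⟩, hexp, hT, hF⟩⟩ ⟨⟨mV', mU'⟩, ⟨⟨ι', π'⟩, hexp', hT', hF'⟩⟩ h
    simp only [Prod.mk.injEq] at h
    obtain ⟨hα, hβ⟩ := Prod.mk.inj h
    -- recover ι = ι' and π = π'
    have hι : ∀ v x, ι.f v x = ι'.f v x := by
      intro v x
      have h1 := DFunLike.congr_fun (congrFun hα v) x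
      simp only [LinearEquiv.ofBijective_apply, LinearMap.comp_apply] at h1
      rw [← hidA mV mU ι π hexp hT hF v x, h1]
      exact hidA mV' mU' ι' π' hexp' hT' hF' v x
    have hπ : ∀ v x, π.f v x = π'.f v x := by
      intro v x
      have h1 := DFunLike.congr_fun (congrFun hβ v) (π₀.f v x)
      simp only [LinearEquiv.ofBijective_apply, LinearMap.comp_apply] at h1
      rw [← hidB mV mU ι π hexp hT hF v x, h1]
      exact hidB mV' mU' ι' π' hexp' hT' hF' v x
    -- recover the representations
    have hmV : mV = mV' := by
      funext e
      apply LinearMap.ext; intro x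
      apply (hexp (Q.tgt e)).1
      calc ι.f (Q.tgt e) (mV e x) = W.m e (ι.f (Q.src e) x) := ι.comm_apply e x
        _ = W.m e (ι'.f (Q.src e) x) := congrArg (W.m e) (hι _ x)
        _ = ι'.f (Q.tgt e) (mV' e x) := (ι'.comm_apply e x).symm
        _ = ι.f (Q.tgt e) (mV' e x) := (hι _ _).symm
    have hmU : mU = mU' := by
      funext e
      apply LinearMap.ext; intro y
      obtain ⟨x, hx⟩ := (hexp (Q.src e)).2.1 y
      calc mU e y = mU e (π.f (Q.src e) x) := by rw [hx]
        _ = (show Fin (N.d (Q.tgt e)) → K from π.f (Q.tgt e) (W.m e x)) := (π.comm_apply e x).symm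
        _ = (show Fin (N.d (Q.tgt e)) → K from π'.f (Q.tgt e) (W.m e x)) := hπ _ _
        _ = mU' e (π'.f (Q.src e) x) := π'.comm_apply e x
        _ = mU' e (π.f (Q.src e) x) := congrArg (mU' e) (hπ _ x).symm
        _ = mU' e y := by rw [hx]
    subst hmV; subst hmU
    refine congrArg _ ?_
    refine Subtype.ext ?_
    refine Prod.ext ?_ ?_
    · exact Hom.f_inj (funext fun v => LinearMap.ext (hι v))
    · exact Hom.f_inj (funext fun v => LinearMap.ext (hπ v))
  · -- inject GL-pairs into the big sigma type
    have comm1 : ∀ (α : ∀ v, (Fin (L.d v) → K) ≃ₗ[K] (Fin (L.d v) → K)) (e : Q.E),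
        (((ι₀.f (Q.tgt e)).comp (α (Q.tgt e)).toLinearMap)).comp
            ((transportRep L L.d α).toRep.m e)
          = (W.m e).comp ((ι₀.f (Q.src e)).comp (α (Q.src e)).toLinearMap) := by
      intro α e
      apply LinearMap.ext; intro x
      show ι₀.f _ (α _ ((α _).symm (L.m e (α _ x)))) = W.m e (ι₀.f _ (α _ x))
      rw [LinearEquiv.apply_symm_apply]
      exact ι₀.comm_apply e _
    have comm2 : ∀ (β : ∀ v, (Fin (N.d v) → K) ≃ₗ[K] (Fin (N.d v) → K)) (e : Q.E),
        ((((β (Q.tgt e)).toLinearMap).comp (π₀.f (Q.tgt e)))).comp (W.m e)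
          = ((transportRep N N.d fun v => (β v).symm).toRep.m e).comp
              (((β (Q.src e)).toLinearMap).comp (π₀.f (Q.src e))) := by
      intro β e
      apply LinearMap.ext; intro x
      simp [transportRep, RepOf.toRep, Hom.comm_apply]
    have hexact : ∀ (α : ∀ v, (Fin (L.d v) → K) ≃ₗ[K] (Fin (L.d v) → K))
        (β : ∀ v, (Fin (N.d v) → K) ≃ₗ[K] (Fin (N.d v) → K)),
        IsExactPair
          (⟨fun v => (ι₀.f v).comp (α v).toLinearMap, comm1 α⟩ :
            Hom (transportRep L L.d α).toRep W)
          (⟨fun v => ((β v).toLinearMap).comp (π₀.f v), comm2 β⟩ :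
            Hom W (transportRep N N.d fun v => (β v).symm).toRep) := by
      intro α β v
      refine ⟨?_, ?_, ?_⟩
      · intro x y hxy
        simp only [LinearMap.comp_apply, LinearEquiv.coe_coe] at hxy
        exact (α v).injective (hι₀inj v hxy)
      · intro y
        obtain ⟨x, hx⟩ := hπ₀surj v ((β v).symm y)
        refine ⟨x, ?_⟩
        show (β v) ((π₀.f v) x) = y
        rw [hx]
        exact (β v).apply_symm_apply y
      · have hkk : ker (((β v).toLinearMap).comp (π₀.f v)) = ker (π₀.f v) := by
          ext x
          simp [LinearMap.mem_ker]
        have hrr : range ((ι₀.f v).comp (α v).toLinearMap) = range (ι₀.f v) := by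
          ext x
          simp only [LinearMap.mem_range, LinearMap.comp_apply, LinearEquiv.coe_coe]
          constructor
          · rintro ⟨y, rfl⟩
            exact ⟨(α v) y, rfl⟩
          · rintro ⟨y, rfl⟩
            exact ⟨(α v).symm y, by simp⟩
        exact hrr.trans ((hex v).2.2.trans hkk.symm)
    have hTnew : ∀ α : ∀ v, (Fin (L.d v) → K) ≃ₗ[K] (Fin (L.d v) → K),
        T (transportRep L L.d α).toRep :=
      fun α => (hTiso _ _ (transportRep_iso L L.d α)).mpr hTL
    have hFnew : ∀ β : ∀ v, (Fin (N.d v) → K) ≃ₗ[K] (Fin (N.d v) → K),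
        F (transportRep N N.d fun v => (β v).symm).toRep :=
      fun β => (hFiso _ _ (transportRep_iso N N.d fun v => (β v).symm)).mpr hFN
    refine Nat.card_le_card_of_injective (fun ab =>
      ⟨(transportRep L L.d ab.1, transportRep N N.d fun v => (ab.2 v).symm),
        ⟨(⟨fun v => (ι₀.f v).comp (ab.1 v).toLinearMap, comm1 ab.1⟩,
          ⟨fun v => ((ab.2 v).toLinearMap).comp (π₀.f v), comm2 ab.2⟩),
          hexact ab.1 ab.2, hTnew ab.1, hFnew ab.2⟩⟩) ?_
    rintro ⟨α, β⟩ ⟨α', β'⟩ h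
    have h1 : ∀ v (x : Fin (L.d v) → K),
        ((ι₀.f v).comp (α v).toLinearMap) x = ((ι₀.f v).comp (α' v).toLinearMap) x :=
      fun v x => congrArg (fun s => s.2.1.1.f v x) h
    have h2 : ∀ v (x : Fin (W.d v) → K),
        (((β v).toLinearMap).comp (π₀.f v)) x = (((β' v).toLinearMap).comp (π₀.f v)) x :=
      fun v x => congrArg (fun s => (s.2.1.2.f v x : Fin (N.d v) → K)) h
    simp only [LinearMap.comp_apply, LinearEquiv.coe_coe] at h1 h2
    refine Prod.ext ?_ ?_
    · funext v
      apply DFunLike.ext; intro x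
      exact hι₀inj v (h1 v x)
    · funext v
      apply DFunLike.ext; intro z
      obtain ⟨y, hy⟩ := hπ₀surj v z
      rw [← hy]
      exact h2 v y

end Core

/-- Let `(T, F)` be a torsion pair in the category of
finite-dimensional representations of a quiver `Q` over a finite field: `T, F` are
closed under isomorphism, `Hom(T, F) = 0`, and every module `M` sits in a (then
automatically unique) short exact sequence `0 → L → M → N → 0` with `L ∈ T`, `N ∈ F`.
Then in the completed Hall algebra `H(Q)` one has `χ = χ(F)·χ(T)`
(recall `[U][V] = ∑ F^W_{UV} [W]`, where `V` is the submodule and `U` the quotient). -/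
theorem stmt1 (Q : FQuiver) (K : Type) [Field K] [Fintype K]
    (T F : Rep Q K → Prop)
    (hTiso : ∀ M N, repIso M N → (T M ↔ T N))
    (hFiso : ∀ M N, repIso M N → (F M ↔ F N))
    (hHom : ∀ (M N : Rep Q K) (φ : Hom M N), T M → F N → ∀ v, φ.f v = 0)
    (hSES : ∀ W : Rep Q K, ∃ (L N : Rep Q K) (ι : Hom L W) (π : Hom W N),
      T L ∧ F N ∧ IsExactPair ι π) :
    hmul (chi F) (chi T) = fun _ => (1 : ℚ) := by
  classical
  funext W
  obtain ⟨L, N, ι₀, π₀, hTL, hFN, hex⟩ := hSES W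
  -- dimension bookkeeping
  have hLd : ∀ v, L.d v ≤ W.d v ∧ W.d v - L.d v = N.d v := by
    intro v
    have h1 := LinearMap.finrank_range_add_finrank_ker (π₀.f v)
    have h2 : LinearMap.range (π₀.f v) = ⊤ :=
      LinearMap.range_eq_top.mpr (hex v).2.1
    have h3 : LinearMap.ker (π₀.f v) = LinearMap.range (ι₀.f v) := ((hex v).2.2).symm
    have h4 : Module.finrank K ↥(LinearMap.range (ι₀.f v)) = L.d v := by
      rw [LinearMap.finrank_range_of_inj (hex v).1]; simp
    rw [h2, h3, h4] at h1
    simp only [finrank_top] at h1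
    simp at h1
    omega
  have hle : ∀ v, L.d v ≤ W.d v := fun v => (hLd v).1
  have hNd : (fun v => W.d v - L.d v) = N.d := funext fun v => (hLd v).2
  -- all terms with δ ≠ L.d vanish
  have hz : ∀ δ : Q.V → ℕ, δ ≠ L.d →
      (∑ᶠ (_ : ∀ v, δ v ≤ W.d v) (mV : RepOf Q K δ)
          (mU : RepOf Q K fun v => W.d v - δ v),
        chi F mU.toRep * chi T mV.toRep * (epairs mU.toRep mV.toRep W : ℚ) /
          ((glcard Q K δ : ℚ) * (glcard Q K fun v => W.d v - δ v))) = 0 := by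
    intro δ hδ
    have h0 : (∑ᶠ (mV : RepOf Q K δ) (mU : RepOf Q K fun v => W.d v - δ v),
        chi F mU.toRep * chi T mV.toRep * (epairs mU.toRep mV.toRep W : ℚ) /
          ((glcard Q K δ : ℚ) * (glcard Q K fun v => W.d v - δ v))) = 0 := by
      refine finsum_eq_zero_of_forall_eq_zero fun mV => ?_
      refine finsum_eq_zero_of_forall_eq_zero fun mU => ?_
      by_cases hT : T mV.toRep
      · by_cases hF : F mU.toRep
        · haveI : IsEmpty {p : Hom mV.toRep W × Hom W mU.toRep //
              IsExactPair p.1 p.2} :=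
            ⟨fun p => hδ (dim_eq hHom hTL hFN hex p.2 hT hF)⟩
          simp [epairs, Nat.card_of_isEmpty]
        · simp [chi, hF]
      · simp [chi, hT]
    rw [finsum_eq_if, h0, ite_self]
  rw [hmul]
  rw [finsum_eq_single _ L.d hz, finsum_eq_if, if_pos hle, hNd]
  letI : Fintype (RepOf Q K L.d) := Fintype.ofFinite _
  letI : Fintype (RepOf Q K N.d) := Fintype.ofFinite _
  simp only [finsum_eq_sum_of_fintype]
  have hterm : ∀ (mV : RepOf Q K L.d) (mU : RepOf Q K N.d),
      chi F mU.toRep * chi T mV.toRep * (epairs mU.toRep mV.toRep W : ℚ) =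
      (Nat.card {p : Hom mV.toRep W × Hom W mU.toRep //
        IsExactPair p.1 p.2 ∧ T mV.toRep ∧ F mU.toRep} : ℚ) := by
    intro mV mU
    by_cases hT : T mV.toRep
    · by_cases hF : F mU.toRep
      · simp only [chi, if_pos hT, if_pos hF, one_mul]
        norm_cast
        rw [epairs]
        exact Nat.card_congr (Equiv.subtypeEquivRight fun p =>
          ⟨fun h => ⟨h, hT, hF⟩, fun h => h.1⟩)
      · haveI : IsEmpty {p : Hom mV.toRep W × Hom W mU.toRep //
            IsExactPair p.1 p.2 ∧ T mV.toRep ∧ F mU.toRep} :=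
          ⟨fun p => hF p.2.2.2⟩
        simp [chi, hF, Nat.card_of_isEmpty]
    · haveI : IsEmpty {p : Hom mV.toRep W × Hom W mU.toRep //
          IsExactPair p.1 p.2 ∧ T mV.toRep ∧ F mU.toRep} :=
        ⟨fun p => hT p.2.2.1⟩
      simp [chi, hT, Nat.card_of_isEmpty]
  simp only [hterm]
  simp only [← Finset.sum_div]
  have hsigma : (∑ mV : RepOf Q K L.d, ∑ mU : RepOf Q K N.d,
      Nat.card {p : Hom mV.toRep W × Hom W mU.toRep //
        IsExactPair p.1 p.2 ∧ T mV.toRep ∧ F mU.toRep}) =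
      Nat.card (Σ q : RepOf Q K L.d × RepOf Q K N.d,
        {p : Hom q.1.toRep W × Hom W q.2.toRep //
          IsExactPair p.1 p.2 ∧ T q.1.toRep ∧ F q.2.toRep}) := by
    rw [nat_card_sigma, Fintype.sum_prod_type]
  have hcount : (∑ mV : RepOf Q K L.d, ∑ mU : RepOf Q K N.d,
      (Nat.card {p : Hom mV.toRep W × Hom W mU.toRep //
        IsExactPair p.1 p.2 ∧ T mV.toRep ∧ F mU.toRep} : ℚ)) =
      (glcard Q K L.d : ℚ) * (glcard Q K N.d : ℚ) := by
    push_cast [← Nat.cast_sum]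
    rw_mod_cast [hsigma, card_eq hTiso hFiso hHom hTL hFN hex]
  rw [hcount]
  have hden : ((glcard Q K L.d : ℚ) * (glcard Q K N.d : ℚ)) ≠ 0 :=
    mul_ne_zero (Nat.cast_ne_zero.mpr (glcard_pos _).ne')
      (Nat.cast_ne_zero.mpr (glcard_pos _).ne')
  exact div_self hden


end QP
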